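/- Let 1 → N → G →^π Q → 1 be an extension, M a G-module with M^N = M (N-invariant), and d : N → M a G-equivariant homomorphism (so [d] ∈ H¹(N,M)^Q). Fix a set-theoretic section α : Q → G with factor set f_α(q₁,q₂) = α(q₁)α(q₂)α(q₁q₂)⁻¹ ∈ N. Then the function F : Q × Q → M defined by F(q₁,q₂) = −d(f_α(q₁,q₂)) is a 2-cocycle of Q with values in M. -/

import Mathlib

/-- Let `1 → N → G → Q → 1` be an extension, `M` a `G`-module on which `N`
acts trivially, and `d : N → M` a `G`-equivariant homomorphism. For a set-theoretic section
`α : Q → G` with factor set `f_α(q₁,q₂) = α(q₁)α(q₂)α(q₁q₂)⁻¹ ∈ N`, the function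
`F(q₁,q₂) = d(f_α(q₁,q₂))⁻¹` is a 2-cocycle of `Q` with values in `M`
(multiplicative notation). -/
theorem tr_cocycle (M G : Type*) [CommGroup M] [Group G] (φ : G →* MulAut M)
    (N : Subgroup G) [hN : N.Normal]
    (htriv : ∀ n ∈ N, ∀ m : M, φ n m = m)
    (d : N → M) (hhom : ∀ n n' : N, d (n * n') = d n * d n')
    (hequiv : ∀ (g : G) (n : N), d ⟨g * (n : G) * g⁻¹, hN.conj_mem _ n.2 g⟩ = φ g (d n))
    (α : G ⧸ N → G) (hα : ∀ q : G ⧸ N, (QuotientGroup.mk (α q) : G ⧸ N) = q) :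
    ∃ F : G ⧸ N → G ⧸ N → M,
      (∀ q₁ q₂ : G ⧸ N, F q₁ q₂ =
        (d ⟨α q₁ * α q₂ * (α (q₁ * q₂))⁻¹, by
          rw [← QuotientGroup.eq_one_iff]
          simp [hα]⟩)⁻¹) ∧
      (∀ q₁ q₂ q₃ : G ⧸ N,
        φ (α q₁) (F q₂ q₃) * F q₁ (q₂ * q₃) = F (q₁ * q₂) q₃ * F q₁ q₂) := by
  have hmem : ∀ q₁ q₂ : G ⧸ N, α q₁ * α q₂ * (α (q₁ * q₂))⁻¹ ∈ N := by
    intro q₁ q₂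
    rw [← QuotientGroup.eq_one_iff]
    simp [hα]
  refine ⟨fun q₁ q₂ => (d ⟨α q₁ * α q₂ * (α (q₁ * q₂))⁻¹, hmem q₁ q₂⟩)⁻¹,
    fun q₁ q₂ => rfl, ?_⟩
  intro q₁ q₂ q₃
  set n23 : N := ⟨α q₂ * α q₃ * (α (q₂ * q₃))⁻¹, hmem q₂ q₃⟩
  set n1_23 : N := ⟨α q₁ * α (q₂ * q₃) * (α (q₁ * (q₂ * q₃)))⁻¹, hmem q₁ (q₂ * q₃)⟩
  set n12 : N := ⟨α q₁ * α q₂ * (α (q₁ * q₂))⁻¹, hmem q₁ q₂⟩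
  set n12_3 : N := ⟨α (q₁ * q₂) * α q₃ * (α ((q₁ * q₂) * q₃))⁻¹, hmem (q₁ * q₂) q₃⟩
  have key : φ (α q₁) (d n23) * d n1_23 = d n12 * d n12_3 := by
    rw [← hequiv (α q₁) n23, ← hhom, ← hhom]
    congr 1
    ext
    show α q₁ * (α q₂ * α q₃ * (α (q₂ * q₃))⁻¹) * (α q₁)⁻¹ *
        (α q₁ * α (q₂ * q₃) * (α (q₁ * (q₂ * q₃)))⁻¹) =
      α q₁ * α q₂ * (α (q₁ * q₂))⁻¹ *
        (α (q₁ * q₂) * α q₃ * (α ((q₁ * q₂) * q₃))⁻¹)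
    rw [mul_assoc q₁ q₂ q₃]
    group
  calc φ (α q₁) (d n23)⁻¹ * (d n1_23)⁻¹
      = (φ (α q₁) (d n23) * d n1_23)⁻¹ := by rw [map_inv, mul_inv]
    _ = (d n12 * d n12_3)⁻¹ := by rw [key]
    _ = (d n12_3)⁻¹ * (d n12)⁻¹ := by rw [mul_inv, mul_comm]
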